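/- Let a₋₁, a₀ ≥ 5 be integers and suppose a_t ≤ 4 for all other indices t of a bi-infinite positive integer sequence {a_n}. Then the product β₀α₋₁ = [0; a₀, a₁, ...]·[0; a₋₁, a₋₂, ...] is the infimum over all j ∈ ℤ of β_jα_{j-1}, where β_j = [0; a_{j-1}, a_{j-2}, ...] and α_{j-1} = [0; a_j, a_{j+1}, ...]. In particular, for the adjacent offsets one has 5(a₀ + 1/a₋₁) < (a₀ + 1/5)(a₋₁ + 1/5) whenever a₀, a₋₁ ≥ 5. -/

import Mathlib

open Filter

/-- Value of a finite continued fraction `[0; h₁, h₂, ...]` given as a list of reals. -/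
noncomputable def cfVal : List ℝ → ℝ
  | [] => 0
  | h :: t => 1 / (h + cfVal t)

lemma cfVal_nonneg (l : List ℝ) (h : ∀ x ∈ l, 0 ≤ x) : 0 ≤ cfVal l := by
  induction l with
  | nil => simp [cfVal]
  | cons h' t ih =>
    have ht := ih (fun x hx => h x (List.mem_cons_of_mem _ hx))
    have h0 := h h' (List.mem_cons_self)
    simp only [cfVal]
    have : (0:ℝ) ≤ h' + cfVal t := by linarith
    exact one_div_nonneg.mpr this

theorem large_middle_infimum (a : ℤ → ℕ+)
    (h0 : 5 ≤ a 0) (h1 : 5 ≤ a (-1))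
    (hsmall : ∀ t : ℤ, t ≠ 0 → t ≠ -1 → a t ≤ 4)
    (α β : ℤ → ℝ)
    (hα : ∀ j : ℤ, Tendsto
      (fun n => cfVal ((List.range n).map fun i => ((a (j + 1 + (i : ℤ)) : ℕ) : ℝ)))
      atTop (nhds (α j)))
    (hβ : ∀ j : ℤ, Tendsto
      (fun n => cfVal ((List.range n).map fun i => ((a (j - 1 - (i : ℤ)) : ℕ) : ℝ)))
      atTop (nhds (β j))) :
    IsLeast {r : ℝ | ∃ j : ℤ, r = β j * α (j - 1)} (β 0 * α (-1)) ∧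
    5 * ((a 0 : ℝ) + 1 / (a (-1) : ℝ)) <
      ((a 0 : ℝ) + 1 / 5) * ((a (-1) : ℝ) + 1 / 5) := by
  have haR : ∀ j : ℤ, (1:ℝ) ≤ ((a j : ℕ) : ℝ) := by
    intro j; exact_mod_cast (a j).one_le
  -- nonnegativity of the limits
  have hαnn : ∀ j : ℤ, 0 ≤ α j := by
    intro j
    refine ge_of_tendsto' (hα j) (fun n => ?_)
    refine cfVal_nonneg _ (fun x hx => ?_)
    simp only [List.mem_map] at hx
    obtain ⟨i, _, rfl⟩ := hx
    positivity
  have hβnn : ∀ j : ℤ, 0 ≤ β j := by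
    intro j
    refine ge_of_tendsto' (hβ j) (fun n => ?_)
    refine cfVal_nonneg _ (fun x hx => ?_)
    simp only [List.mem_map] at hx
    obtain ⟨i, _, rfl⟩ := hx
    positivity
  -- recurrences
  have hrecα : ∀ j : ℤ, α j = 1 / (((a (j+1) : ℕ) : ℝ) + α (j+1)) := by
    intro j
    have hdpos : (0:ℝ) < ((a (j+1) : ℕ) : ℝ) + α (j+1) := by
      have := haR (j+1); have := hαnn (j+1); linarith
    have h2 : ∀ n, cfVal ((List.range (n+1)).map fun i => ((a (j + 1 + (i : ℤ)) : ℕ) : ℝ))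
        = 1 / (((a (j+1) : ℕ) : ℝ)
            + cfVal ((List.range n).map fun i => ((a (j + 1 + 1 + (i : ℤ)) : ℕ) : ℝ))) := by
      intro n
      have hl : (List.range (n+1)).map (fun i => ((a (j + 1 + (i:ℤ)) : ℕ) : ℝ))
          = ((a (j+1) : ℕ) : ℝ) :: (List.range n).map (fun i => ((a (j + 1 + 1 + (i:ℤ)) : ℕ) : ℝ)) := by
        simp only [List.range_succ_eq_map, List.map_map, Function.comp, List.map_cons,
          List.bind_eq_flatMap, List.pure_def, List.flatMap_cons, List.singleton_append,
          List.flatMap_map, List.map_flatMap]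
        norm_num
        refine List.flatMap_congr fun i hi => ?_
        congr 3
        push_cast
        ring
      rw [hl, cfVal]
    have h3 : Tendsto (fun n => cfVal ((List.range (n+1)).map
        fun i => ((a (j + 1 + (i : ℤ)) : ℕ) : ℝ))) atTop (nhds (α j)) :=
      (hα j).comp (tendsto_add_atTop_nat 1)
    have h4 : Tendsto (fun n => 1 / (((a (j+1) : ℕ) : ℝ)
        + cfVal ((List.range n).map fun i => ((a (j + 1 + 1 + (i : ℤ)) : ℕ) : ℝ))))
        atTop (nhds (1 / (((a (j+1) : ℕ) : ℝ) + α (j+1)))) :=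
      tendsto_const_nhds.div (tendsto_const_nhds.add (hα (j+1))) hdpos.ne'
    exact tendsto_nhds_unique (h3.congr h2) h4
  have hrecβ : ∀ j : ℤ, β j = 1 / (((a (j-1) : ℕ) : ℝ) + β (j-1)) := by
    intro j
    have hdpos : (0:ℝ) < ((a (j-1) : ℕ) : ℝ) + β (j-1) := by
      have := haR (j-1); have := hβnn (j-1); linarith
    have h2 : ∀ n, cfVal ((List.range (n+1)).map fun i => ((a (j - 1 - (i : ℤ)) : ℕ) : ℝ))
        = 1 / (((a (j-1) : ℕ) : ℝ)
            + cfVal ((List.range n).map fun i => ((a (j - 1 - 1 - (i : ℤ)) : ℕ) : ℝ))) := by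
      intro n
      have hl : (List.range (n+1)).map (fun i => ((a (j - 1 - (i:ℤ)) : ℕ) : ℝ))
          = ((a (j-1) : ℕ) : ℝ) :: (List.range n).map (fun i => ((a (j - 1 - 1 - (i:ℤ)) : ℕ) : ℝ)) := by
        simp only [List.range_succ_eq_map, List.map_map, Function.comp, List.map_cons,
          List.bind_eq_flatMap, List.pure_def, List.flatMap_cons, List.singleton_append,
          List.flatMap_map, List.map_flatMap]
        norm_num
        refine List.flatMap_congr fun i hi => ?_
        congr 3
        push_cast
        ring
      rw [hl, cfVal]
    have h3 : Tendsto (fun n => cfVal ((List.range (n+1)).map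
        fun i => ((a (j - 1 - (i : ℤ)) : ℕ) : ℝ))) atTop (nhds (β j)) :=
      (hβ j).comp (tendsto_add_atTop_nat 1)
    have h4 : Tendsto (fun n => 1 / (((a (j-1) : ℕ) : ℝ)
        + cfVal ((List.range n).map fun i => ((a (j - 1 - 1 - (i : ℤ)) : ℕ) : ℝ))))
        atTop (nhds (1 / (((a (j-1) : ℕ) : ℝ) + β (j-1)))) :=
      tendsto_const_nhds.div (tendsto_const_nhds.add (hβ (j-1))) hdpos.ne'
    exact tendsto_nhds_unique (h3.congr h2) h4
  -- strict bounds
  have hαpos : ∀ j : ℤ, 0 < α j := by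
    intro j
    rw [hrecα j]
    have := haR (j+1); have := hαnn (j+1)
    positivity
  have hβpos : ∀ j : ℤ, 0 < β j := by
    intro j
    rw [hrecβ j]
    have := haR (j-1); have := hβnn (j-1)
    positivity
  have hαlt1 : ∀ j : ℤ, α j < 1 := by
    intro j
    rw [hrecα j]
    have h1 := haR (j+1); have h2 := hαpos (j+1)
    rw [div_lt_one (by linarith)]
    linarith
  have hβlt1 : ∀ j : ℤ, β j < 1 := by
    intro j
    rw [hrecβ j]
    have h1 := haR (j-1); have h2 := hβpos (j-1)
    rw [div_lt_one (by linarith)]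
    linarith
  -- product formula
  have key : ∀ k : ℤ, β k * α (k-1)
      = 1 / ((((a (k-1) : ℕ) : ℝ) + β (k-1)) * (((a k : ℕ) : ℝ) + α k)) := by
    intro k
    have hk : k - 1 + 1 = k := by ring
    rw [hrecβ k, hrecα (k-1), hk, div_mul_div_comm, one_mul]
  have hDpos : ∀ k : ℤ, 0 < (((a (k-1) : ℕ) : ℝ) + β (k-1)) * (((a k : ℕ) : ℝ) + α k) := by
    intro k
    have := haR (k-1); have := hβpos (k-1); have := haR k; have := hαpos k
    nlinarith
  have h0R : (5:ℝ) ≤ ((a 0 : ℕ) : ℝ) := by exact_mod_cast h0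
  have h1R : (5:ℝ) ≤ ((a (-1) : ℕ) : ℝ) := by exact_mod_cast h1
  have hsmallR : ∀ t : ℤ, t ≠ 0 → t ≠ -1 → ((a t : ℕ) : ℝ) ≤ 4 := by
    intro t ht0 ht1; exact_mod_cast hsmall t ht0 ht1
  constructor
  · constructor
    · exact ⟨0, by norm_num⟩
    · rintro r ⟨j, rfl⟩
      rw [key j, show β 0 * α (-1) = β 0 * α (0-1) by norm_num, key 0]
      rw [div_le_div_iff₀ (hDpos 0) (hDpos j), one_mul, one_mul]
      -- need D j ≤ D 0
      have hD0a := haR (-1); have hD0b := hβpos (-1)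
      have hD0c := hαpos 0
      have e0 : (0:ℤ) - 1 = -1 := by norm_num
      rw [e0]
      by_cases hj0 : j = 0
      · subst hj0; rw [e0]
      · by_cases hj1 : j = 1
        · subst hj1
          have e1 : (1:ℤ) - 1 = 0 := by norm_num
          rw [e1]
          -- D 1 = (a0+β0)(a1+α1), D0 = (a(-1)+β(-1))(a0+α0)
          have hβ0 : β 0 < 1/5 := by
            rw [hrecβ 0, e0]
            rw [div_lt_div_iff₀ (by linarith) (by norm_num)]
            linarith
          have ha1 : ((a 1 : ℕ) : ℝ) ≤ 4 := hsmallR 1 (by norm_num) (by norm_num)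
          have hα1 : α 1 < 1 := hαlt1 1
          have hα1p : α 1 > 0 := hαpos 1
          have hα0 : 1/5 < α 0 := by
            have hα0e : α 0 = 1 / (((a 1 : ℕ) : ℝ) + α 1) := by
              rw [hrecα 0]; norm_num
            rw [hα0e, lt_div_iff₀ (by linarith)]
            linarith
          have hβ0p := hβpos 0
          nlinarith [mul_pos hβ0p hα1p, hαpos 0, hβpos (-1)]
        · by_cases hjm1 : j = -1
          · subst hjm1
            have e2 : (-1:ℤ) - 1 = -2 := by norm_num
            rw [e2]
            -- D(-1) = (a(-2)+β(-2))(a(-1)+α(-1)), D0 = (a(-1)+β(-1))(a0+α0)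
            have ha2 : ((a (-2) : ℕ) : ℝ) ≤ 4 := hsmallR (-2) (by norm_num) (by norm_num)
            have hβ2 : β (-2) < 1 := hβlt1 (-2)
            have hβ2p : β (-2) > 0 := hβpos (-2)
            have hαm1 : α (-1) < 1/5 := by
              have hαm1e : α (-1) = 1 / (((a 0 : ℕ) : ℝ) + α 0) := by
                rw [hrecα (-1)]; norm_num
              rw [hαm1e, div_lt_div_iff₀ (by linarith) (by norm_num)]
              linarith
            have hβm1 : 1/5 < β (-1) := by
              rw [hrecβ (-1), e2, lt_div_iff₀ (by linarith)]
              linarith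
            have hαm1p := hαpos (-1)
            nlinarith [hαpos 0]
          · -- generic case: both a(j-1) and a j are ≤ 4
            have haj : ((a j : ℕ) : ℝ) ≤ 4 := hsmallR j hj0 hjm1
            have hajm : ((a (j-1) : ℕ) : ℝ) ≤ 4 := by
              refine hsmallR (j-1) (fun h => hj1 ?_) (fun h => hj0 ?_) <;> omega
            have h1' := hβlt1 (j-1); have h2' := hαlt1 j
            have h3' := hβpos (j-1); have h4' := hαpos j
            have h5' := haR (j-1); have h6' := haR j
            nlinarith [hβpos (-1), hαpos 0,
              mul_pos (show (0:ℝ) < ((a (j-1) : ℕ) : ℝ) + β (j-1) by linarith)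
                (show (0:ℝ) < ((a j : ℕ) : ℝ) + α j by linarith)]
  · -- the numeric inequality
    have hinv : 1 / ((a (-1) : ℝ)) ≤ 1/5 := by
      have : (5:ℝ) ≤ ((a (-1) : ℕ) : ℝ) := h1R
      rw [div_le_div_iff₀ (by push_cast; linarith) (by norm_num)]
      push_cast
      linarith
    have h0' : (5:ℝ) ≤ (a 0 : ℝ) := by push_cast; exact_mod_cast h0
    have h1' : (5:ℝ) ≤ (a (-1) : ℝ) := by push_cast; exact_mod_cast h1
    nlinarith
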